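/- Fix a real R ≠ 0. In Module.End ℝ (MvPolynomial ℝ (Fin D)), let X_m denote multiplication by the m-th variable, ∂_m := pderiv m, 𝔞 := Σ_μ ε μ • (X_μ)² (a polynomial), E := Σ_μ X_μ ∘ ∂_μ the Euler operator, and define P n := (multiplication by (1 + 𝔞/(4R²))) ∘ ∂_n − (ε n/(2R²)) • (X_n ∘ E) and L m n := ε m • (X_m ∘ ∂_n) − ε n • (X_n ∘ ∂_m). Then these operators realize the so(p+1,q) algebra: (i) L m n = −L n m and ⁅L m n, L k l⁆ = η n k • L m l + η m l • L n k − η n l • L m k − η m k • L n l; (ii) ⁅L m n, P l⁆ = η n l • P m − η m l • P n; (iii) ⁅P n, P m⁆ = (1/R²) • L n m, where ⁅a,b⁆ = a∘b − b∘a. -/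

import Mathlib

noncomputable section

open MvPolynomial

/-- The flat `so(p,q)` metric sign factor. -/
def eps (p : ℕ) {D : ℕ} (m : Fin D) : ℝ := if (m : ℕ) < p then -1 else 1

/-- The flat `so(p,q)` metric. -/
def eta (p : ℕ) {D : ℕ} (m n : Fin D) : ℝ := if m = n then eps p m else 0

set_option maxHeartbeats 1000000

namespace S13

abbrev En (D : ℕ) := Module.End ℝ (MvPolynomial (Fin D) ℝ)

def Xo {D : ℕ} (m : Fin D) : En D := LinearMap.mulLeft ℝ (X m)
def Pd {D : ℕ} (m : Fin D) : En D := (pderiv m).toLinearMap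

variable {D : ℕ}

attribute [local instance 100] LieRing.ofAssociativeRing

lemma pderiv_X' (i j : Fin D) : (pderiv i) (X j : MvPolynomial (Fin D) ℝ) = if i = j then 1 else 0 := by
  rw [pderiv_X]; split_ifs with h
  · subst h; simp
  · simp [Pi.single, Function.update, Ne.symm h]

lemma pderiv_comm' (i j : Fin D) (f : MvPolynomial (Fin D) ℝ) :
    pderiv i (pderiv j f) = pderiv j (pderiv i f) := by
  induction f using MvPolynomial.induction_on with
  | C a => simp
  | add p q hp hq => simp [hp, hq]
  | mul_X p k h =>
    simp only [pderiv_mul, pderiv_X, Pi.single_apply, map_add, h]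
    split_ifs <;> simp <;> ring

lemma dx (n m : Fin D) : Pd n * Xo m = Xo m * Pd n + (if n = m then (1:ℝ) else 0) • 1 := by
  apply LinearMap.ext; intro f
  simp only [Pd, Xo, Module.End.mul_apply, LinearMap.add_apply, LinearMap.smul_apply,
    Module.End.one_apply, LinearMap.mulLeft_apply, Derivation.coeFn_coe]
  rw [pderiv_mul, pderiv_X']
  split_ifs <;> simp [add_comm]

lemma xx (m l : Fin D) : Xo m * Xo l = Xo l * Xo m := by
  apply LinearMap.ext; intro f
  simp only [Xo, Module.End.mul_apply, LinearMap.mulLeft_apply]; ring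

lemma dd (n m : Fin D) : Pd n * Pd m = Pd m * Pd n := by
  apply LinearMap.ext; intro f
  simp only [Pd, Module.End.mul_apply, Derivation.coeFn_coe]
  exact pderiv_comm' _ _ _


lemma lie_mul' (a b c : En D) : ⁅a, b*c⁆ = ⁅a,b⁆*c + b*⁅a,c⁆ := by
  simp only [Ring.lie_def, sub_mul, mul_sub, mul_assoc]; abel

lemma lie_smul' (t : ℝ) (a b : En D) : ⁅a, t • b⁆ = t • ⁅a, b⁆ := by
  simp only [Ring.lie_def, mul_smul_comm, smul_mul_assoc, smul_sub]

lemma smul_lie' (t : ℝ) (a b : En D) : ⁅t • a, b⁆ = t • ⁅a, b⁆ := by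
  simp only [Ring.lie_def, mul_smul_comm, smul_mul_assoc, smul_sub]

lemma lie_sub' (a b c : En D) : ⁅a, b - c⁆ = ⁅a, b⁆ - ⁅a, c⁆ := lie_sub a b c

lemma sub_lie' (a b c : En D) : ⁅a - b, c⁆ = ⁅a, c⁆ - ⁅b, c⁆ := sub_lie a b c

lemma hMM (a b c d : Fin D) :
    ⁅Xo a * Pd b, Xo c * Pd d⁆ =
      (if b = c then (1:ℝ) else 0) • (Xo a * Pd d) - (if d = a then (1:ℝ) else 0) • (Xo c * Pd b) := by
  have h1 : ∀ (a b c d : Fin D), Xo a * Pd b * (Xo c * Pd d)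
      = Xo a * Xo c * (Pd b * Pd d) + (if b = c then (1:ℝ) else 0) • (Xo a * Pd d) := by
    intro a b c d
    calc Xo a * Pd b * (Xo c * Pd d) = Xo a * (Pd b * Xo c) * Pd d := by noncomm_ring
    _ = Xo a * (Xo c * Pd b + (if b = c then (1:ℝ) else 0) • 1) * Pd d := by rw [dx]
    _ = _ := by
      simp only [mul_add, add_mul, mul_smul_comm, smul_mul_assoc, one_mul, mul_one, mul_assoc]
  rw [Ring.lie_def, h1, h1]
  rw [show Xo c * Xo a = Xo a * Xo c from xx c a, show Pd d * Pd b = Pd b * Pd d from dd d b]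
  abel

lemma hdM (l a b : Fin D) : ⁅Pd l, Xo a * Pd b⁆ = (if l = a then (1:ℝ) else 0) • Pd b := by
  rw [Ring.lie_def]
  calc Pd l * (Xo a * Pd b) - Xo a * Pd b * Pd l
      = (Xo a * Pd l + (if l = a then (1:ℝ) else 0) • 1) * Pd b - Xo a * Pd b * Pd l := by
        rw [← mul_assoc, dx]
    _ = Xo a * (Pd l * Pd b) + (if l = a then (1:ℝ) else 0) • Pd b - Xo a * (Pd b * Pd l) := by
        simp only [add_mul, smul_mul_assoc, one_mul, mul_assoc]
    _ = _ := by rw [dd]; abel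

lemma hxM (l a b : Fin D) : ⁅Xo l, Xo a * Pd b⁆ = -((if b = l then (1:ℝ) else 0) • Xo a) := by
  rw [Ring.lie_def]
  calc Xo l * (Xo a * Pd b) - Xo a * Pd b * Xo l
      = Xo a * (Xo l * Pd b) - Xo a * (Xo l * Pd b + (if b = l then (1:ℝ) else 0) • 1) := by
        rw [mul_assoc, dx]
        rw [show Xo l * (Xo a * Pd b) = Xo a * (Xo l * Pd b) from by
          rw [← mul_assoc, ← mul_assoc, xx]]
    _ = _ := by simp only [mul_add, mul_smul_comm, mul_one]; abel

def Ao (p D : ℕ) : En D := ∑ μ : Fin D, eps p μ • (Xo μ * Xo μ)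
def Ee (D : ℕ) : En D := ∑ μ : Fin D, Xo μ * Pd μ

lemma dE (n : Fin D) : Pd n * Ee D = Ee D * Pd n + Pd n := by
  rw [Ee, Finset.mul_sum, Finset.sum_mul]
  have h : ∀ μ : Fin D, Pd n * (Xo μ * Pd μ)
      = Xo μ * Pd μ * Pd n + (if n = μ then (1:ℝ) else 0) • Pd μ := by
    intro μ
    calc Pd n * (Xo μ * Pd μ) = (Pd n * Xo μ) * Pd μ := by rw [mul_assoc]
      _ = (Xo μ * Pd n + (if n = μ then (1:ℝ) else 0) • 1) * Pd μ := by rw [dx]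
      _ = Xo μ * (Pd n * Pd μ) + (if n = μ then (1:ℝ) else 0) • Pd μ := by
          simp only [add_mul, smul_mul_assoc, one_mul, mul_assoc]
      _ = _ := by rw [dd, ← mul_assoc]
  simp only [h, Finset.sum_add_distrib, ite_smul, one_smul, zero_smul,
    Finset.sum_ite_eq, Finset.mem_univ, if_true]

lemma xE (m : Fin D) : Ee D * Xo m = Xo m * Ee D + Xo m := by
  rw [Ee, Finset.mul_sum, Finset.sum_mul]
  have h : ∀ μ : Fin D, (Xo μ * Pd μ) * Xo m
      = Xo m * (Xo μ * Pd μ) + (if μ = m then (1:ℝ) else 0) • Xo μ := by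
    intro μ
    calc (Xo μ * Pd μ) * Xo m = Xo μ * (Pd μ * Xo m) := by rw [mul_assoc]
      _ = Xo μ * (Xo m * Pd μ) + (if μ = m then (1:ℝ) else 0) • Xo μ := by
          rw [dx]; simp only [mul_add, mul_smul_comm, mul_one]
      _ = _ := by rw [← mul_assoc, ← mul_assoc, xx]
  simp only [h, Finset.sum_add_distrib, ite_smul, one_smul, zero_smul,
    Finset.sum_ite_eq', Finset.mem_univ, if_true]

lemma dA (p : ℕ) (n : Fin D) :
    Pd n * Ao p D = Ao p D * Pd n + (2 * eps p n) • Xo n := by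
  rw [Ao, Finset.mul_sum, Finset.sum_mul]
  have h : ∀ μ : Fin D, Pd n * (eps p μ • (Xo μ * Xo μ))
      = (eps p μ • (Xo μ * Xo μ)) * Pd n
        + (if n = μ then (2 * eps p μ : ℝ) else 0) • Xo μ := by
    intro μ
    have h1 : Pd n * (Xo μ * Xo μ)
        = Xo μ * Xo μ * Pd n + ((if n = μ then (1:ℝ) else 0) * 2) • Xo μ := by
      calc Pd n * (Xo μ * Xo μ) = (Pd n * Xo μ) * Xo μ := by rw [mul_assoc]
        _ = (Xo μ * Pd n + (if n = μ then (1:ℝ) else 0) • 1) * Xo μ := by rw [dx]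
        _ = Xo μ * (Pd n * Xo μ) + (if n = μ then (1:ℝ) else 0) • Xo μ := by
            simp only [add_mul, smul_mul_assoc, one_mul, mul_assoc]
        _ = Xo μ * (Xo μ * Pd n + (if n = μ then (1:ℝ) else 0) • 1)
              + (if n = μ then (1:ℝ) else 0) • Xo μ := by rw [dx]
        _ = _ := by
            simp only [mul_add, mul_smul_comm, mul_one, ← mul_assoc, ite_smul, zero_smul,
              one_smul, mul_ite, mul_one, mul_zero]
            split_ifs
            · rw [one_mul, two_smul ℝ]; abel
            · simp
    rw [mul_smul_comm, smul_mul_assoc, h1, smul_add, smul_smul]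
    congr 1
    split_ifs <;> simp [smul_smul] <;> ring_nf
  simp only [h, Finset.sum_add_distrib, ite_smul, zero_smul,
    Finset.sum_ite_eq, Finset.mem_univ, if_true]

lemma xA (p : ℕ) (m : Fin D) : Xo m * Ao p D = Ao p D * Xo m := by
  rw [Ao, Finset.mul_sum, Finset.sum_mul]
  refine Finset.sum_congr rfl fun μ _ => ?_
  rw [mul_smul_comm, smul_mul_assoc]
  congr 1
  calc Xo m * (Xo μ * Xo μ) = (Xo m * Xo μ) * Xo μ := by rw [← mul_assoc]
    _ = (Xo μ * Xo m) * Xo μ := by rw [xx m μ]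
    _ = Xo μ * (Xo m * Xo μ) := by rw [mul_assoc]
    _ = Xo μ * (Xo μ * Xo m) := by rw [xx m μ]
    _ = _ := by rw [← mul_assoc]

lemma EA (p : ℕ) : Ee D * Ao p D = Ao p D * Ee D + (2:ℝ) • Ao p D := by
  rw [Ao, Finset.mul_sum, Finset.sum_mul, Finset.smul_sum, ← Finset.sum_add_distrib]
  refine Finset.sum_congr rfl fun μ _ => ?_
  rw [mul_smul_comm, smul_mul_assoc, smul_smul, mul_comm (2:ℝ), ← smul_smul, ← smul_add]
  congr 1
  calc Ee D * (Xo μ * Xo μ) = (Ee D * Xo μ) * Xo μ := by rw [← mul_assoc]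
    _ = Xo μ * (Ee D * Xo μ) + Xo μ * Xo μ := by
        conv_lhs => rw [xE]
        simp only [add_mul, mul_assoc]
    _ = Xo μ * (Xo μ * Ee D + Xo μ) + Xo μ * Xo μ := by conv_lhs => rw [xE]
    _ = _ := by rw [mul_add, two_smul ℝ, ← mul_assoc]; abel

lemma hME (a b : Fin D) : ⁅Xo a * Pd b, Ee D⁆ = 0 := by
  rw [Ring.lie_def, sub_eq_zero]
  calc Xo a * Pd b * Ee D = Xo a * (Pd b * Ee D) := by rw [mul_assoc]
    _ = Xo a * (Ee D * Pd b) + Xo a * Pd b := by rw [dE, mul_add]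
    _ = (Xo a * Ee D + Xo a) * Pd b := by rw [add_mul, mul_assoc]
    _ = (Ee D * Xo a) * Pd b := by rw [xE]
    _ = Ee D * (Xo a * Pd b) := by rw [mul_assoc]

lemma hMA (p : ℕ) (a b : Fin D) :
    ⁅Xo a * Pd b, Ao p D⁆ = (2 * eps p b) • (Xo a * Xo b) := by
  rw [Ring.lie_def]
  calc Xo a * Pd b * Ao p D - Ao p D * (Xo a * Pd b)
      = Xo a * (Ao p D * Pd b) + (2 * eps p b) • (Xo a * Xo b) - Ao p D * (Xo a * Pd b) := by
        rw [mul_assoc, dA, mul_add, mul_smul_comm]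
    _ = (Xo a * Ao p D) * Pd b + (2 * eps p b) • (Xo a * Xo b) - (Ao p D * Xo a) * Pd b := by
        rw [mul_assoc, mul_assoc]
    _ = _ := by rw [xA]; abel

def Bo (p D : ℕ) (c : ℝ) : En D := 1 + c • Ao p D

lemma dB (p : ℕ) (c : ℝ) (n : Fin D) :
    Pd n * Bo p D c = Bo p D c * Pd n + (2 * c * eps p n) • Xo n := by
  rw [Bo, mul_add, add_mul, mul_one, one_mul, mul_smul_comm, smul_mul_assoc, dA,
    smul_add, smul_smul]
  rw [show c * (2 * eps p n) = 2 * c * eps p n by ring]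
  abel

lemma xB (p : ℕ) (c : ℝ) (m : Fin D) : Xo m * Bo p D c = Bo p D c * Xo m := by
  rw [Bo, mul_add, add_mul, mul_one, one_mul, mul_smul_comm, smul_mul_assoc, xA]

lemma EB (p : ℕ) (c : ℝ) :
    Ee D * Bo p D c = Bo p D c * Ee D + (2 * c) • Ao p D := by
  rw [Bo, mul_add, add_mul, mul_one, one_mul, mul_smul_comm, smul_mul_assoc, EA,
    smul_add, smul_smul]
  rw [show c * 2 = 2 * c by ring]
  abel

lemma k1 (p : ℕ) (c : ℝ) (n m : Fin D) :
    ⁅Bo p D c * Pd n, Bo p D c * Pd m⁆ =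
      (2 * c * eps p n) • (Bo p D c * (Xo n * Pd m))
        - (2 * c * eps p m) • (Bo p D c * (Xo m * Pd n)) := by
  have h : ∀ n m : Fin D, Bo p D c * Pd n * (Bo p D c * Pd m)
      = Bo p D c * Bo p D c * (Pd n * Pd m) + (2 * c * eps p n) • (Bo p D c * (Xo n * Pd m)) := by
    intro n m
    calc Bo p D c * Pd n * (Bo p D c * Pd m) = Bo p D c * (Pd n * Bo p D c) * Pd m := by
          noncomm_ring
      _ = Bo p D c * (Bo p D c * Pd n + (2 * c * eps p n) • Xo n) * Pd m := by rw [dB]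
      _ = _ := by
          simp only [mul_add, add_mul, mul_smul_comm, smul_mul_assoc, mul_assoc]
  rw [Ring.lie_def, h, h, dd m n]
  abel

lemma k3 (n m : Fin D) : ⁅Xo n * Ee D, Xo m * Ee D⁆ = 0 := by
  have h : ∀ n m : Fin D, Xo n * Ee D * (Xo m * Ee D)
      = Xo n * Xo m * (Ee D * Ee D) + Xo n * Xo m * Ee D := by
    intro n m
    calc Xo n * Ee D * (Xo m * Ee D) = Xo n * (Ee D * Xo m) * Ee D := by noncomm_ring
      _ = Xo n * (Xo m * Ee D + Xo m) * Ee D := by rw [xE]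
      _ = _ := by noncomm_ring
  rw [Ring.lie_def, h, h, sub_eq_zero, xx m n]

lemma k2 (p : ℕ) (c : ℝ) (n m : Fin D) :
    ⁅Bo p D c * Pd n, Xo m * Ee D⁆ =
      Bo p D c * (Xo m * Pd n) + (if n = m then (1:ℝ) else 0) • (Bo p D c * Ee D)
        - (2 * c) • (Ao p D * (Xo m * Pd n)) := by
  rw [Ring.lie_def]
  have h1 : Bo p D c * Pd n * (Xo m * Ee D)
      = Bo p D c * (Xo m * (Ee D * Pd n)) + Bo p D c * (Xo m * Pd n)
        + (if n = m then (1:ℝ) else 0) • (Bo p D c * Ee D) := by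
    calc Bo p D c * Pd n * (Xo m * Ee D) = Bo p D c * ((Pd n * Xo m) * Ee D) := by noncomm_ring
      _ = Bo p D c * ((Xo m * Pd n + (if n = m then (1:ℝ) else 0) • 1) * Ee D) := by rw [dx]
      _ = Bo p D c * (Xo m * (Pd n * Ee D))
            + (if n = m then (1:ℝ) else 0) • (Bo p D c * Ee D) := by
          simp only [add_mul, smul_mul_assoc, one_mul, mul_add, mul_smul_comm, mul_assoc]
      _ = _ := by rw [dE, mul_add, mul_add]
  have h2 : Xo m * Ee D * (Bo p D c * Pd n)
      = Bo p D c * (Xo m * (Ee D * Pd n)) + (2 * c) • (Ao p D * (Xo m * Pd n)) := by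
    calc Xo m * Ee D * (Bo p D c * Pd n) = Xo m * ((Ee D * Bo p D c) * Pd n) := by noncomm_ring
      _ = Xo m * ((Bo p D c * Ee D + (2 * c) • Ao p D) * Pd n) := by rw [EB]
      _ = Xo m * (Bo p D c * (Ee D * Pd n)) + (2 * c) • (Xo m * (Ao p D * Pd n)) := by
          simp only [add_mul, smul_mul_assoc, mul_add, mul_smul_comm, mul_assoc]
      _ = _ := by
          rw [← mul_assoc (Xo m), xB, ← mul_assoc (Xo m), xA, mul_assoc, mul_assoc]
  rw [h1, h2]
  abel


def Lo (p : ℕ) {D : ℕ} (m n : Fin D) : En D :=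
  eps p m • (Xo m * Pd n) - eps p n • (Xo n * Pd m)

def Po (p : ℕ) {D : ℕ} (R : ℝ) (l : Fin D) : En D :=
  Bo p D (1/(4*R^2)) * Pd l - (eps p l / (2*R^2)) • (Xo l * Ee D)

lemma hBpoly (p : ℕ) (c : ℝ) :
    LinearMap.mulLeft ℝ ((1 : MvPolynomial (Fin D) ℝ) + c • ∑ μ : Fin D, eps p μ • (X μ ^ 2))
      = Bo p D c := by
  apply LinearMap.ext; intro f
  simp only [LinearMap.mulLeft_apply, Bo, Ao, Xo, LinearMap.add_apply, Module.End.one_apply,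
    LinearMap.smul_apply, LinearMap.sum_apply, Module.End.mul_apply, add_mul, one_mul,
    smul_mul_assoc, Finset.sum_mul, pow_two, mul_assoc]

lemma partIa (p : ℕ) (m n : Fin D) : Lo p m n = - Lo p n m := by
  rw [Lo, Lo, neg_sub]

lemma partIb (p : ℕ) (m n k l : Fin D) :
    ⁅Lo p m n, Lo p k l⁆ =
      eta p n k • Lo p m l + eta p m l • Lo p n k - eta p n l • Lo p m k - eta p m k • Lo p n l := by
  simp only [Lo, sub_lie', lie_sub', smul_lie', lie_smul', hMM, smul_sub, smul_smul, eta]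
  split_ifs <;> subst_vars <;>
    first
      | module
      | (exfalso; simp_all only [eq_self_iff_true, not_true])

lemma hLA (p : ℕ) (m n : Fin D) : ⁅Lo p m n, Ao p D⁆ = 0 := by
  simp only [Lo, sub_lie', smul_lie', hMA, smul_smul]
  rw [xx n m, show eps p m * (2 * eps p n) = eps p n * (2 * eps p m) by ring, sub_self]

lemma hLE (p : ℕ) (m n : Fin D) : ⁅Lo p m n, Ee D⁆ = 0 := by
  simp only [Lo, sub_lie', smul_lie', hME, smul_zero, sub_zero]

lemma hLB (p : ℕ) (c : ℝ) (m n : Fin D) : ⁅Lo p m n, Bo p D c⁆ = 0 := by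
  rw [Bo, lie_add, lie_smul', hLA, smul_zero, add_zero, Ring.lie_def, mul_one, one_mul, sub_self]

lemma hLd (p : ℕ) (m n l : Fin D) :
    ⁅Lo p m n, Pd l⁆ = (eps p n * (if l = n then (1:ℝ) else 0)) • Pd m
      - (eps p m * (if l = m then (1:ℝ) else 0)) • Pd n := by
  rw [← lie_skew, Lo, lie_sub', lie_smul', lie_smul', hdM, hdM, smul_smul, smul_smul, neg_sub]

lemma hLx (p : ℕ) (m n l : Fin D) :
    ⁅Lo p m n, Xo l⁆ = (eps p m * (if n = l then (1:ℝ) else 0)) • Xo m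
      - (eps p n * (if m = l then (1:ℝ) else 0)) • Xo n := by
  rw [← lie_skew, Lo, lie_sub', lie_smul', lie_smul', hxM, hxM, smul_neg, smul_neg, smul_smul,
    smul_smul, neg_sub, sub_neg_eq_add, neg_add_eq_sub]

lemma partII (p : ℕ) (R : ℝ) (m n l : Fin D) :
    ⁅Lo p m n, Po p R l⁆ = eta p n l • Po p R m - eta p m l • Po p R n := by
  rw [Po, lie_sub', lie_smul', lie_mul', hLB, zero_mul, zero_add, lie_mul', hLE, mul_zero,
    add_zero, hLd, hLx]
  simp only [mul_sub, sub_mul, mul_smul_comm, smul_mul_assoc, smul_sub, smul_smul, Po, eta,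
    mul_assoc]
  split_ifs <;> subst_vars <;>
    first
      | module
      | (exfalso; simp_all only [eq_self_iff_true, not_true])

lemma partIII (p : ℕ) (R : ℝ) (n m : Fin D) :
    ⁅Po p R n, Po p R m⁆ = (1/R^2) • Lo p n m := by
  have hskew : ⁅Xo n * Ee D, Bo p D (1/(4*R^2)) * Pd m⁆
      = -⁅Bo p D (1/(4*R^2)) * Pd m, Xo n * Ee D⁆ := (lie_skew _ _).symm
  simp only [Po, lie_sub', sub_lie', lie_smul', smul_lie']
  rw [k1, k3, hskew, k2, k2]
  simp only [Lo, Bo, add_mul, one_mul, smul_mul_assoc, smul_sub, smul_add, smul_smul, smul_zero,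
    smul_neg, mul_add, mul_smul_comm]
  split_ifs <;> subst_vars <;>
    first
      | module
      | (exfalso; simp_all only [eq_self_iff_true, not_true])

end S13


theorem stmt_13 (p q : ℕ) (R : ℝ) (hR : R ≠ 0) :
    let D := p + q
    let Xop : Fin D → Module.End ℝ (MvPolynomial (Fin D) ℝ) :=
      fun m => LinearMap.mulLeft ℝ (X m)
    let pd : Fin D → Module.End ℝ (MvPolynomial (Fin D) ℝ) :=
      fun m => (pderiv m).toLinearMap
    let 𝔞 : MvPolynomial (Fin D) ℝ := ∑ μ : Fin D, eps p μ • (X μ ^ 2)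
    let E : Module.End ℝ (MvPolynomial (Fin D) ℝ) := ∑ μ : Fin D, Xop μ * pd μ
    let P : Fin D → Module.End ℝ (MvPolynomial (Fin D) ℝ) :=
      fun n => LinearMap.mulLeft ℝ (1 + (1 / (4 * R ^ 2)) • 𝔞) * pd n
        - (eps p n / (2 * R ^ 2)) • (Xop n * E)
    let L : Fin D → Fin D → Module.End ℝ (MvPolynomial (Fin D) ℝ) :=
      fun m n => eps p m • (Xop m * pd n) - eps p n • (Xop n * pd m)
    ((∀ m n, L m n = - L n m) ∧
      (∀ m n k l, ⁅L m n, L k l⁆ =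
        eta p n k • L m l + eta p m l • L n k - eta p n l • L m k - eta p m k • L n l)) ∧
    (∀ m n l, ⁅L m n, P l⁆ = eta p n l • P m - eta p m l • P n) ∧
    (∀ n m, ⁅P n, P m⁆ = (1 / R ^ 2) • L n m) := by
  intro D Xop pd 𝔞 E P L
  have hL : ∀ m n : Fin D, L m n = S13.Lo p m n := fun m n => rfl
  have hP : ∀ l : Fin D, P l = S13.Po p R l := fun l => by
    show LinearMap.mulLeft ℝ (1 + (1 / (4 * R ^ 2)) • ∑ μ : Fin D, eps p μ • (X μ ^ 2))
          * S13.Pd l - (eps p l / (2 * R ^ 2)) • (S13.Xo l * S13.Ee D) = S13.Po p R l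
    rw [S13.hBpoly, S13.Po]
  refine ⟨⟨fun m n => ?_, fun m n k l => ?_⟩, fun m n l => ?_, fun n m => ?_⟩
  · rw [hL, hL]; exact S13.partIa p m n
  · simp only [hL]; exact S13.partIb p m n k l
  · simp only [hL, hP]; exact S13.partII p R m n l
  · simp only [hL, hP]; exact S13.partIII p R n m
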